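/- Let Σ be a finite nonempty alphabet, P a stochastic language over Σ, and let A = (ι, (T_x)_{x∈Σ}, τ) be a multiplicity automaton with finite state set Q that is a reduced representation of P. Then there exist a constant C > 0 and ρ ∈ [0,1) such that for every integer k ≥ 0 and every pair of states q, q' ∈ Q, Σ_{u∈Σ^k} |T_u(q,q')| ≤ C·ρ^k. -/

import Mathlib

open scoped BigOperators Matrix

/-- A stochastic language over the alphabet `A`: a nonnegative real-valued function on
words whose values are summable with sum `1`. -/
def IsStochastic {A : Type*} (p : List A → ℝ) : Prop :=
  (∀ w, 0 ≤ p w) ∧ HasSum p 1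

/-- The matrix associated to a word: the product of the letter matrices. -/
def wordMat {A Q : Type*} [Fintype Q] [DecidableEq Q] (T : A → Matrix Q Q ℝ)
    (w : List A) : Matrix Q Q ℝ :=
  (w.map T).prod

/-- The series computed by the multiplicity automaton `(ι, T, τ)`. -/
def maSeries {A Q : Type*} [Fintype Q] [DecidableEq Q] (ι τ : Q → ℝ)
    (T : A → Matrix Q Q ℝ) (w : List A) : ℝ :=
  ι ⬝ᵥ (wordMat T w).mulVec τ

/-- The series of state `q` of the multiplicity automaton. -/
def stateSeries {A Q : Type*} [Fintype Q] [DecidableEq Q] (τ : Q → ℝ)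
    (T : A → Matrix Q Q ℝ) (q : Q) (w : List A) : ℝ :=
  (wordMat T w).mulVec τ q

/-- `(ι, T, τ)` is a reduced representation of the stochastic language `P`. -/
def IsReducedRep {A Q : Type*} [Fintype Q] [DecidableEq Q] (ι τ : Q → ℝ)
    (T : A → Matrix Q Q ℝ) (P : List A → ℝ) : Prop :=
  maSeries ι τ T = P ∧ (∀ q, IsStochastic (stateSeries τ T q)) ∧
    LinearIndependent ℝ (stateSeries τ T)

lemma wordMat_append {A Q : Type*} [Fintype Q] [DecidableEq Q] (T : A → Matrix Q Q ℝ)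
    (u w : List A) : wordMat T (u ++ w) = wordMat T u * wordMat T w := by
  simp [wordMat]

lemma span_top {A Q : Type*} [Fintype Q] [DecidableEq Q] (τ : Q → ℝ)
    (T : A → Matrix Q Q ℝ) (hli : LinearIndependent ℝ (stateSeries τ T)) :
    Submodule.span ℝ (Set.range fun w : List A => (wordMat T w).mulVec τ) = ⊤ := by
  by_contra hne
  obtain ⟨f, hf0, hfb⟩ := Submodule.exists_dual_map_eq_bot_of_lt_top
    (lt_top_iff_ne_top.mpr hne) inferInstance
  set c : Q → ℝ := fun q => f (fun j => if q = j then 1 else 0) with hcdef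
  have hker : ∀ w : List A, f ((wordMat T w).mulVec τ) = 0 := by
    intro w
    have hm : (wordMat T w).mulVec τ ∈ Submodule.span ℝ
        (Set.range fun w : List A => (wordMat T w).mulVec τ) :=
      Submodule.subset_span ⟨w, rfl⟩
    have := Submodule.mem_map_of_mem (f := f) hm
    rw [hfb] at this
    simpa using this
  have hfx : ∀ x : Q → ℝ, f x = ∑ q, x q * c q := by
    intro x
    conv_lhs => rw [pi_eq_sum_univ x]
    simp [map_sum, map_smul, smul_eq_mul]
    rfl
  have hc : ∀ q, c q = 0 := by
    apply Fintype.linearIndependent_iff.mp hli c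
    funext w
    have := hker w
    rw [hfx] at this
    simpa [stateSeries, mul_comm, Finset.sum_apply] using this
  apply hf0
  apply LinearMap.ext
  intro x
  rw [hfx]
  simp [hc]

lemma exists_words {A Q : Type*} [Fintype Q] [DecidableEq Q] (τ : Q → ℝ)
    (T : A → Matrix Q Q ℝ)
    (hspan : Submodule.span ℝ (Set.range fun w : List A => (wordMat T w).mulVec τ) = ⊤) :
    ∃ (e : Q → List A) (N : Matrix Q Q ℝ),
      (Matrix.of fun q j => (wordMat T (e j)).mulVec τ q) * N = 1 := by
  classical
  obtain ⟨b, hbsub, hbspan, hbli⟩ :=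
    exists_linearIndependent ℝ (Set.range fun w : List A => (wordMat T w).mulVec τ)
  rw [hspan] at hbspan
  have hbfin : b.Finite := hbli.setFinite
  haveI : Fintype b := hbfin.fintype
  have hbas : Module.Basis b ℝ (Q → ℝ) := Module.Basis.mk hbli (by rw [Subtype.range_coe]; exact hbspan.ge)
  have hcard : Fintype.card Q = Fintype.card b := by
    rw [← Module.finrank_eq_card_basis hbas, Module.finrank_pi]
  let eqv : Q ≃ b := Fintype.equivOfCardEq hcard
  have hmem : ∀ q : Q, (↑(eqv q) : Q → ℝ) ∈
      (Set.range fun w : List A => (wordMat T w).mulVec τ) := fun q => hbsub (eqv q).2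
  choose e he using hmem
  refine ⟨e, ?_⟩
  let hbas2 : Module.Basis Q ℝ (Q → ℝ) :=
    (Module.Basis.mk hbli (by rw [Subtype.range_coe]; exact hbspan.ge)).reindex eqv.symm
  have hbas2eq : ∀ q, hbas2 q = (wordMat T (e q)).mulVec τ := by
    intro q
    have h1 : hbas2 q = ↑(eqv q) := by simp [hbas2, Module.Basis.reindex_apply, Module.Basis.mk_apply]
    rw [h1, ← he q]
  have hM : (Matrix.of fun q j => (wordMat T (e j)).mulVec τ q)
      = (Pi.basisFun ℝ Q).toMatrix hbas2 := by
    ext q j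
    rw [Module.Basis.toMatrix_apply, Pi.basisFun_repr, hbas2eq]
    rfl
  haveI := (Pi.basisFun ℝ Q).invertibleToMatrix hbas2
  refine ⟨⅟((Pi.basisFun ℝ Q).toMatrix hbas2), ?_⟩
  rw [hM, mul_invOf_self]

lemma sum_append_le {A : Type*} [Fintype A] (p : List A → ℝ)
    (hp : ∀ w, 0 ≤ p w) (k : ℕ) (w : List A) :
    ∑ f : Fin k → A, p (List.ofFn f ++ w) ≤ ∑ g : Fin (k + w.length) → A, p (List.ofFn g) := by
  classical
  set φ : (Fin k → A) → (Fin (k + w.length) → A) := fun f i =>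
    if h : (i : ℕ) < k then f ⟨i, h⟩ else w.get ⟨(i : ℕ) - k, by omega⟩ with hφ
  have hof : ∀ f, List.ofFn (φ f) = List.ofFn f ++ w := by
    intro f
    rw [List.ofFn_add]
    congr 1
    · congr 1
      funext i
      simp [hφ, Fin.castAdd]
    · have : (fun j : Fin w.length => φ f (Fin.natAdd k j)) = w.get := by
        funext j
        simp [hφ, Fin.natAdd]
      rw [this, List.ofFn_get]
  have hinj : Function.Injective φ := by
    intro f f' h
    have : List.ofFn f ++ w = List.ofFn f' ++ w := by
      rw [← hof, ← hof, h]
    exact List.ofFn_injective (List.append_cancel_right this)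
  calc ∑ f : Fin k → A, p (List.ofFn f ++ w)
      = ∑ g ∈ Finset.univ.image φ, p (List.ofFn g) := by
        rw [Finset.sum_image (fun a _ b _ h => hinj h)]
        simp [hof]
    _ ≤ ∑ g : Fin (k + w.length) → A, p (List.ofFn g) :=
        Finset.sum_le_sum_of_subset_of_nonneg (Finset.subset_univ _)
          (fun g _ _ => hp _)

lemma tail_tendsto {A : Type*} [Fintype A] (p : List A → ℝ) (hp0 : ∀ w, 0 ≤ p w)
    (hp : HasSum p 1) :
    Filter.Tendsto (fun m => ∑ g : Fin m → A, p (List.ofFn g)) Filter.atTop (nhds 0) := by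
  classical
  set t : ℕ → ℝ := fun m => ∑ g : Fin m → A, p (List.ofFn g) with ht
  set W : ℕ → Finset (List A) := fun m => Finset.image (fun g : Fin m → A => List.ofFn g)
    Finset.univ with hW
  have htW : ∀ m, t m = ∑ u ∈ W m, p u := by
    intro m
    rw [hW]
    exact (Finset.sum_image (fun a _ b _ h => List.ofFn_injective h)).symm
  have hlen : ∀ m u, u ∈ W m → u.length = m := by
    intro m u hu
    simp only [hW, Finset.mem_image] at hu
    obtain ⟨g, _, rfl⟩ := hu
    simp
  have hnn : ∀ m, 0 ≤ t m := fun m => Finset.sum_nonneg fun g _ => hp0 _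
  have hb : ∀ M, ∑ m ∈ Finset.range M, t m ≤ 1 := by
    intro M
    have hdisj : (↑(Finset.range M) : Set ℕ).PairwiseDisjoint W := by
      intro m _ m' _ hmm'
      refine Finset.disjoint_left.mpr fun u hu hu' => hmm' ?_
      rw [← hlen m u hu, ← hlen m' u hu']
    calc ∑ m ∈ Finset.range M, t m = ∑ u ∈ (Finset.range M).biUnion W, p u := by
          rw [Finset.sum_biUnion hdisj]
          exact Finset.sum_congr rfl fun m _ => htW m
      _ ≤ 1 := sum_le_hasSum _ (fun u _ => hp0 u) hp
  exact (summable_of_sum_range_le hnn hb).tendsto_atTop_zero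

lemma matrix_abs_mul {Q : Type*} [Fintype Q] (M N : Matrix Q Q ℝ) :
    ∑ q, ∑ q', |(M * N) q q'| ≤ (∑ q, ∑ q', |M q q'|) * (∑ q, ∑ q', |N q q'|) := by
  have hB : ∀ c, ∑ q', |N c q'| ≤ ∑ b, ∑ q', |N b q'| :=
    fun c => Finset.single_le_sum
      (f := fun b => ∑ q', |N b q'|)
      (fun b _ => Finset.sum_nonneg fun _ _ => abs_nonneg _) (Finset.mem_univ c)
  calc ∑ q, ∑ q', |(M * N) q q'|
      ≤ ∑ q, ∑ q', ∑ c, |M q c| * |N c q'| := by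
        refine Finset.sum_le_sum fun q _ => Finset.sum_le_sum fun q' _ => ?_
        rw [Matrix.mul_apply]
        exact (Finset.abs_sum_le_sum_abs _ _).trans (le_of_eq (by simp [abs_mul]))
    _ = ∑ q, ∑ c, |M q c| * ∑ q', |N c q'| := by
        refine Finset.sum_congr rfl fun q _ => ?_
        rw [Finset.sum_comm]
        exact Finset.sum_congr rfl fun c _ => (Finset.mul_sum _ _ _).symm
    _ ≤ ∑ q, ∑ c, |M q c| * (∑ b, ∑ q', |N b q'|) := by
        refine Finset.sum_le_sum fun q _ => Finset.sum_le_sum fun c _ => ?_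
        exact mul_le_mul_of_nonneg_left (hB c) (abs_nonneg _)
    _ = _ := by simp only [← Finset.sum_mul]

lemma S_submul {A Q : Type*} [Fintype A] [Fintype Q] [DecidableEq Q]
    (T : A → Matrix Q Q ℝ) (k l : ℕ) :
    (∑ h : Fin (k + l) → A, ∑ q, ∑ q', |wordMat T (List.ofFn h) q q'|)
      ≤ (∑ f : Fin k → A, ∑ q, ∑ q', |wordMat T (List.ofFn f) q q'|) *
        (∑ g : Fin l → A, ∑ q, ∑ q', |wordMat T (List.ofFn g) q q'|) := by
  classical
  set E : (Fin (k + l) → A) ≃ (Fin k → A) × (Fin l → A) :=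
    (Equiv.arrowCongr finSumFinEquiv.symm (Equiv.refl A)).trans
      (Equiv.sumArrowEquivProdArrow _ _ A) with hE
  have key : ∀ h : Fin (k + l) → A,
      List.ofFn h = List.ofFn (E h).1 ++ List.ofFn (E h).2 := by
    intro h
    rw [List.ofFn_add]
    congr 1
  have step1 : (∑ h : Fin (k + l) → A, ∑ q, ∑ q', |wordMat T (List.ofFn h) q q'|)
      = ∑ p : (Fin k → A) × (Fin l → A), ∑ q, ∑ q',
          |(wordMat T (List.ofFn p.1) * wordMat T (List.ofFn p.2)) q q'| := by
    refine Fintype.sum_equiv E _ _ fun h => ?_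
    rw [← wordMat_append, ← key]
  rw [step1, Fintype.sum_prod_type]
  calc ∑ f : Fin k → A, ∑ g : Fin l → A, ∑ q, ∑ q',
        |(wordMat T (List.ofFn f) * wordMat T (List.ofFn g)) q q'|
      ≤ ∑ f : Fin k → A, ∑ g : Fin l → A,
          (∑ q, ∑ q', |wordMat T (List.ofFn f) q q'|) *
          (∑ q, ∑ q', |wordMat T (List.ofFn g) q q'|) := by
        refine Finset.sum_le_sum fun f _ => Finset.sum_le_sum fun g _ => ?_
        exact matrix_abs_mul _ _
    _ = _ := by
        simp only [← Finset.mul_sum, ← Finset.sum_mul]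

lemma geom_decay (S : ℕ → ℝ) (hnn : ∀ k, 0 ≤ S k)
    (hsub : ∀ k l, S (k + l) ≤ S k * S l)
    (h0 : Filter.Tendsto S Filter.atTop (nhds 0)) :
    ∃ C > (0:ℝ), ∃ ρ ∈ Set.Ico (0:ℝ) 1, ∀ k, S k ≤ C * ρ ^ k := by
  classical
  have hev : ∀ᶠ k in Filter.atTop, S k < 1/2 :=
    h0.eventually_lt_const (by norm_num : (0:ℝ) < 1/2)
  obtain ⟨N, hN⟩ := Filter.eventually_atTop.mp hev
  set m : ℕ := max N 1 with hmdef
  have hm1 : 1 ≤ m := le_max_right _ _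
  have hm0 : 0 < m := hm1
  have hmhalf : S m ≤ 1/2 := (hN m (le_max_left _ _)).le
  have hne : (Finset.range m).Nonempty := ⟨0, Finset.mem_range.mpr hm0⟩
  set C1 : ℝ := max ((Finset.range m).sup' hne S) 1 with hC1def
  have hC1one : (1:ℝ) ≤ C1 := le_max_right _ _
  have hC1pos : (0:ℝ) < C1 := lt_of_lt_of_le one_pos hC1one
  have claim : ∀ k, S k ≤ C1 * (1/2 : ℝ) ^ (k / m) := by
    intro k
    induction k using Nat.strong_induction_on with
    | _ k ih =>
      by_cases hk : k < m
      · rw [Nat.div_eq_of_lt hk, pow_zero, mul_one]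
        exact le_trans (Finset.le_sup' S (Finset.mem_range.mpr hk)) (le_max_left _ _)
      · push_neg at hk
        have hkm : k - m < k := Nat.sub_lt (lt_of_lt_of_le hm0 hk) hm0
        have h1 : S k ≤ S (k - m) * S m := by
          have hh : k - m + m = k := Nat.sub_add_cancel hk
          calc S k = S (k - m + m) := by rw [hh]
            _ ≤ S (k - m) * S m := hsub _ _
        have h2 : S (k - m) * S m ≤ (C1 * (1/2:ℝ) ^ ((k - m) / m)) * (1/2) :=
          mul_le_mul (ih _ hkm) hmhalf (hnn m) (by positivity)
        have h3 : (C1 * (1/2:ℝ) ^ ((k - m) / m)) * (1/2)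
            = C1 * (1/2:ℝ) ^ ((k - m) / m + 1) := by
          rw [pow_succ]; ring
        have h4 : (k - m) / m + 1 = k / m := (Nat.div_eq_sub_div hm0 hk).symm
        calc S k ≤ (C1 * (1/2:ℝ) ^ ((k - m) / m)) * (1/2) := le_trans h1 h2
          _ = C1 * (1/2:ℝ) ^ (k / m) := by rw [h3, h4]
  set ρ : ℝ := (1/2 : ℝ) ^ ((m : ℝ)⁻¹) with hρdef
  have hminv : (0:ℝ) < (m:ℝ)⁻¹ := by positivity
  have hρmem : ρ ∈ Set.Ico (0:ℝ) 1 := by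
    constructor
    · exact Real.rpow_nonneg (by norm_num) _
    · exact Real.rpow_lt_one (by norm_num) (by norm_num) hminv
  refine ⟨2 * C1, by positivity, ρ, hρmem, fun k => ?_⟩
  have hρk : ρ ^ k = (1/2 : ℝ) ^ ((m:ℝ)⁻¹ * (k:ℝ)) := by
    rw [← Real.rpow_natCast ρ k, hρdef, ← Real.rpow_mul (by norm_num)]
  have hkey : (1/2 : ℝ) ^ (k / m) ≤ 2 * ρ ^ k := by
    have hexp : (m:ℝ)⁻¹ * (k:ℝ) - 1 ≤ ((k / m : ℕ) : ℝ) := by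
      have hnat : k < m * (k / m) + m := by
        have h5 := Nat.div_add_mod k m
        have h6 := Nat.mod_lt k hm0
        omega
      have hr : (k:ℝ) < (m:ℝ) * ((k / m : ℕ) : ℝ) + m := by exact_mod_cast hnat
      rw [sub_le_iff_le_add, inv_mul_eq_div, div_le_iff₀ (by exact_mod_cast hm0)]
      nlinarith
    calc (1/2 : ℝ) ^ (k / m) = (1/2 : ℝ) ^ (((k / m : ℕ) : ℝ)) := by
          rw [Real.rpow_natCast]
      _ ≤ (1/2 : ℝ) ^ ((m:ℝ)⁻¹ * (k:ℝ) - 1) :=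
          Real.rpow_le_rpow_of_exponent_ge (by norm_num) (by norm_num) hexp
      _ = 2 * ρ ^ k := by
          rw [Real.rpow_sub (by norm_num), Real.rpow_one, hρk]; ring
  calc S k ≤ C1 * (1/2 : ℝ) ^ (k / m) := claim k
    _ ≤ C1 * (2 * ρ ^ k) := mul_le_mul_of_nonneg_left hkey hC1pos.le
    _ = (2 * C1) * ρ ^ k := by ring

theorem statement9 {A Q : Type*} [Fintype A] [Nonempty A] [Fintype Q] [DecidableEq Q]
    (P : List A → ℝ) (hP : IsStochastic P)
    (ι τ : Q → ℝ) (T : A → Matrix Q Q ℝ) (hred : IsReducedRep ι τ T P) :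
    ∃ C > (0 : ℝ), ∃ ρ ∈ Set.Ico (0 : ℝ) 1,
      ∀ (k : ℕ) (q q' : Q),
        ∑ f : Fin k → A, |wordMat T (List.ofFn f) q q'| ≤ C * ρ ^ k := by
  classical
  obtain ⟨hma, hstoch, hli⟩ := hred
  have hspan := span_top τ T hli
  obtain ⟨e, N, hMN⟩ := exists_words τ T hspan
  have hnn : ∀ (w : List A) (q : Q), 0 ≤ (wordMat T w).mulVec τ q :=
    fun w q => (hstoch q).1 w
  set K : ℝ := ∑ a : Q, ∑ b : Q, |N a b| with hKdef
  have hK0 : 0 ≤ K := Finset.sum_nonneg fun a _ => Finset.sum_nonneg fun b _ => abs_nonneg _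
  have hKb : ∀ a b, |N a b| ≤ K := by
    intro a b
    calc |N a b| ≤ ∑ b', |N a b'| :=
          Finset.single_le_sum (f := fun b' => |N a b'|)
            (fun i _ => abs_nonneg _) (Finset.mem_univ b)
      _ ≤ K := Finset.single_le_sum (f := fun a' => ∑ b', |N a' b'|)
          (fun a' _ => Finset.sum_nonneg fun _ _ => abs_nonneg _) (Finset.mem_univ a)
  have hdecomp : ∀ u : List A, wordMat T u
      = (wordMat T u * Matrix.of fun q j => (wordMat T (e j)).mulVec τ q) * N := by
    intro u
    rw [Matrix.mul_assoc, hMN, Matrix.mul_one]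
  have hcol : ∀ (u : List A) (j q : Q),
      (wordMat T u * Matrix.of fun q j => (wordMat T (e j)).mulVec τ q) q j
        = (wordMat T (u ++ e j)).mulVec τ q := by
    intro u j q
    rw [wordMat_append, ← Matrix.mulVec_mulVec]
    simp [Matrix.mul_apply, Matrix.mulVec, dotProduct]
  have key : ∀ (u : List A) (q q' : Q),
      |wordMat T u q q'| ≤ ∑ j, (wordMat T (u ++ e j)).mulVec τ q * K := by
    intro u q q'
    conv_lhs => rw [hdecomp u]
    rw [Matrix.mul_apply]
    refine (Finset.abs_sum_le_sum_abs _ _).trans ?_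
    refine Finset.sum_le_sum fun j _ => ?_
    rw [abs_mul, hcol, abs_of_nonneg (hnn _ _)]
    exact mul_le_mul_of_nonneg_left (hKb j q') (hnn _ _)
  set S : ℕ → ℝ := fun k => ∑ f : Fin k → A, ∑ q, ∑ q', |wordMat T (List.ofFn f) q q'|
    with hSdef
  have hSnn : ∀ k, 0 ≤ S k := fun k =>
    Finset.sum_nonneg fun f _ => Finset.sum_nonneg fun q _ =>
      Finset.sum_nonneg fun q' _ => abs_nonneg _
  have hSsub : ∀ k l, S (k + l) ≤ S k * S l := fun k l => S_submul T k l
  set t : Q → ℕ → ℝ := fun q m => ∑ g : Fin m → A, (wordMat T (List.ofFn g)).mulVec τ q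
    with htdef
  set U : ℕ → ℝ := fun k => ∑ q : Q, ∑ _q' : Q, ∑ j : Q, K * t q (k + (e j).length)
    with hUdef
  have hSU : ∀ k, S k ≤ U k := by
    intro k
    have hswap : S k = ∑ q, ∑ q', ∑ f : Fin k → A, |wordMat T (List.ofFn f) q q'| := by
      calc S k = ∑ q : Q, ∑ f : Fin k → A, ∑ q' : Q, |wordMat T (List.ofFn f) q q'| :=
            Finset.sum_comm
        _ = _ := Finset.sum_congr rfl fun q _ => Finset.sum_comm
    rw [hswap, hUdef]
    refine Finset.sum_le_sum fun q _ => Finset.sum_le_sum fun q' _ => ?_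
    calc ∑ f : Fin k → A, |wordMat T (List.ofFn f) q q'|
        ≤ ∑ f : Fin k → A, ∑ j, (wordMat T (List.ofFn f ++ e j)).mulVec τ q * K :=
          Finset.sum_le_sum fun f _ => key _ q q'
      _ = ∑ j, (∑ f : Fin k → A, (wordMat T (List.ofFn f ++ e j)).mulVec τ q) * K := by
          rw [Finset.sum_comm]
          exact Finset.sum_congr rfl fun j _ => (Finset.sum_mul _ _ _).symm
      _ ≤ ∑ j, t q (k + (e j).length) * K := by
          refine Finset.sum_le_sum fun j _ => mul_le_mul_of_nonneg_right ?_ hK0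
          exact sum_append_le (fun w => (wordMat T w).mulVec τ q) (fun w => hnn w q) k (e j)
      _ = ∑ j, K * t q (k + (e j).length) := by
          exact Finset.sum_congr rfl fun j _ => mul_comm _ _
  have hU0 : Filter.Tendsto U Filter.atTop (nhds 0) := by
    have h0 : (0:ℝ) = ∑ q : Q, ∑ _q' : Q, ∑ j : Q, (0:ℝ) := by simp
    rw [hUdef, h0]
    refine tendsto_finset_sum _ fun q _ => ?_
    refine tendsto_finset_sum _ fun q' _ => ?_
    refine tendsto_finset_sum _ fun j _ => ?_
    have htail : Filter.Tendsto (fun m => t q m) Filter.atTop (nhds 0) :=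
      tail_tendsto (stateSeries τ T q) (hstoch q).1 (hstoch q).2
    have hcomp : Filter.Tendsto (fun k => t q (k + (e j).length)) Filter.atTop (nhds 0) :=
      htail.comp (Filter.tendsto_add_atTop_nat _)
    simpa using hcomp.const_mul K
  have hS0 : Filter.Tendsto S Filter.atTop (nhds 0) := squeeze_zero hSnn hSU hU0
  obtain ⟨C, hC, ρ, hρ, hbound⟩ := geom_decay S hSnn hSsub hS0
  refine ⟨C, hC, ρ, hρ, fun k q q' => le_trans ?_ (hbound k)⟩
  refine Finset.sum_le_sum fun f _ => ?_
  calc |wordMat T (List.ofFn f) q q'|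
      ≤ ∑ b, |wordMat T (List.ofFn f) q b| :=
        Finset.single_le_sum (f := fun b => |wordMat T (List.ofFn f) q b|)
          (fun i _ => abs_nonneg _) (Finset.mem_univ q')
    _ ≤ ∑ a, ∑ b, |wordMat T (List.ofFn f) a b| :=
        Finset.single_le_sum (f := fun a => ∑ b, |wordMat T (List.ofFn f) a b|)
          (fun a _ => Finset.sum_nonneg fun _ _ => abs_nonneg _) (Finset.mem_univ q)
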